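/- Consider a finite-horizon MDP with horizon H, and for each h ∈ {1,…,H} let ρ_h be a probability measure on X × Act. Let F be a collection of tuples f = (f_1,…,f_H) of bounded measurable functions f_h : X × Act → ℝ (with the convention f_{H+1} = 0) such that for each f ∈ F and each h a measurable greedy policy π_{f,h}(x) ∈ argmax_{a ∈ Act} f_h(x,a) exists; assume the optimal value functions Q* = (Q*_1,…,Q*_H), defined by Q*_{H+1} = 0 and Q*_h = T_h Q*_{h+1}, belong to F, and write π* := π_{Q*}. Suppose C ≥ 0 is a constant such that for all f, g ∈ F: Σ_{h=1}^H ∫ |f_h(x,a) − T_h f_{h+1}(x,a)| d d^{π_g}_h(x,a) ≤ C · Σ_{h=1}^H ( ∫ (f_h(x,a) − T_h f_{h+1}(x,a))² dρ_h(x,a) )^{1/2} (a Bellman transfer coefficient bound for ρ with respect to F). If f ∈ F and ε ≥ 0 satisfy ∫ (f_h(x,a) − T_h f_{h+1}(x,a))² dρ_h(x,a) ≤ ε for every h ∈ {1,…,H}, then the greedy policy π := π_f satisfies J(π*) − J(π) ≤ 2·C·H·√ε. -/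

import Mathlib

open MeasureTheory ProbabilityTheory
open scoped BigOperators

namespace OfflineRLBellmanTransfer

variable {X Act : Type*} [MeasurableSpace X] [MeasurableSpace Act]

/-- The law of the state `x_h` (0-indexed: `x_0 = x₁` is the fixed initial
state, `x_{h+1} ∼ P_h(x_h, π_h(x_h))`). -/
noncomputable def stateDist (P : ℕ → Kernel (X × Act) X) (x1 : X)
    (π : ℕ → X → Act) : ℕ → Measure X
  | 0 => Measure.dirac x1
  | (h + 1) => (stateDist P x1 π h).bind (fun x => P h (x, π h x))

/-- The occupancy measure `d^π_h`: the law of `(x_h, a_h)` with `a_h = π_h(x_h)`. -/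
noncomputable def occupancy (P : ℕ → Kernel (X × Act) X) (x1 : X)
    (π : ℕ → X → Act) (h : ℕ) : Measure (X × Act) :=
  (stateDist P x1 π h).map (fun x => (x, π h x))

/-- Expected return `J(π) = Σ_h ∫ R_h d d^π_h`. -/
noncomputable def ret (P : ℕ → Kernel (X × Act) X) (R : ℕ → X → Act → ℝ)
    (x1 : X) (H : ℕ) (π : ℕ → X → Act) : ℝ :=
  ∑ h ∈ Finset.range H, ∫ p : X × Act, R h p.1 p.2 ∂(occupancy P x1 π h)

/-- The reward Bellman backup `T_h f (x,a) = R_h(x,a) + ∫ sup_a' f(x',a') dP_h(x,a)`. -/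
noncomputable def bellman (P : ℕ → Kernel (X × Act) X) (R : ℕ → X → Act → ℝ)
    (h : ℕ) (f : X → Act → ℝ) : X → Act → ℝ :=
  fun x a => R h x a + ∫ x', (⨆ a', f x' a') ∂(P h (x, a))

lemma integrable_of_abs_le {α : Type*} [MeasurableSpace α] {μ : Measure α} [IsFiniteMeasure μ]
    {g : α → ℝ} (hg : AEStronglyMeasurable g μ) (B : ℝ) (hB : ∀ x, |g x| ≤ B) :
    Integrable g μ :=
  Integrable.mono' (integrable_const B) hg
    (Filter.Eventually.of_forall fun x => (Real.norm_eq_abs _) ▸ hB x)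

lemma integral_bind_kernel (μ : Measure X) [IsProbabilityMeasure μ]
    (κ : Kernel X X) [IsMarkovKernel κ] {g : X → ℝ}
    (hg : Measurable g) (B : ℝ) (hB : ∀ x, |g x| ≤ B) :
    ∫ y, g y ∂(μ.bind κ) = ∫ x, ∫ y, g y ∂(κ x) ∂μ := by
  have hsnd : μ.bind κ = (μ ⊗ₘ κ).snd := by
    ext s hs
    rw [Measure.bind_apply hs (Kernel.measurable κ).aemeasurable, Measure.snd_apply hs,
      Measure.compProd_apply (measurable_snd hs)]
    rfl
  have hint : Integrable (fun p : X × X => g p.2) (μ ⊗ₘ κ) :=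
    integrable_of_abs_le (hg.comp measurable_snd).aestronglyMeasurable B fun p => hB p.2
  rw [hsnd, Measure.snd, integral_map measurable_snd.aemeasurable hg.aestronglyMeasurable,
    Measure.integral_compProd hint]

lemma isProb_stateDist (P : ℕ → Kernel (X × Act) X) (hP : ∀ h, IsMarkovKernel (P h))
    (x1 : X) (π : ℕ → X → Act) (hπ : ∀ h, Measurable (π h)) (h : ℕ) :
    IsProbabilityMeasure (stateDist P x1 π h) := by
  induction h with
  | zero => exact Measure.dirac.isProbabilityMeasure
  | succ n ih =>
    have hm : Measurable (fun x => P n (x, π n x)) :=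
      (Kernel.measurable (P n)).comp (measurable_id.prodMk (hπ n))
    constructor
    rw [stateDist, Measure.bind_apply MeasurableSet.univ hm.aemeasurable]
    have := hP n
    simp only [measure_univ, lintegral_one]

lemma step_decomp
    (P : ℕ → Kernel (X × Act) X) (hP : ∀ h, IsMarkovKernel (P h))
    (R : ℕ → X → Act → ℝ) (hRmeas : ∀ h, Measurable fun p : X × Act => R h p.1 p.2)
    (hR01 : ∀ h x a, R h x a ∈ Set.Icc (0:ℝ) 1)
    (x1 : X)
    (f : ℕ → X → Act → ℝ) (hfmeas : ∀ h, Measurable fun p : X × Act => f h p.1 p.2)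
    (B : ℝ) (hB : ∀ h x a, |f h x a| ≤ B)
    (σ : ℕ → X → Act) (hσ : ∀ h, Measurable (σ h))
    (hgreedy : ∀ h x a, f h x a ≤ f h x (σ h x))
    (π : ℕ → X → Act) (hπ : ∀ h, Measurable (π h)) (h : ℕ) :
    ∫ p : X × Act, (f h p.1 p.2 - bellman P R h (f (h+1)) p.1 p.2) ∂(occupancy P x1 π h)
      = (∫ x, f h x (π h x) ∂(stateDist P x1 π h))
        - (∫ p : X × Act, R h p.1 p.2 ∂(occupancy P x1 π h))
        - (∫ x, f (h+1) x (σ (h+1) x) ∂(stateDist P x1 π (h+1))) := by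
  haveI := hP h
  haveI := isProb_stateDist P hP x1 π hπ h
  set μ := stateDist P x1 π h with hμdef
  have he : Measurable (fun x : X => (x, π h x)) := measurable_id.prodMk (hπ h)
  haveI : IsProbabilityMeasure (occupancy P x1 π h) := by
    rw [occupancy]; exact Measure.isProbabilityMeasure_map he.aemeasurable
  have hAct : Nonempty Act := ⟨σ 0 x1⟩
  set V : X → ℝ := fun x => f (h+1) x (σ (h+1) x) with hVdef
  have hVmeas : Measurable V := (hfmeas (h+1)).comp (measurable_id.prodMk (hσ (h+1)))
  have hVbd : ∀ x, |V x| ≤ B := fun x => hB _ _ _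
  have hsup : ∀ x, (⨆ a, f (h+1) x a) = V x := by
    intro x
    refine le_antisymm (ciSup_le fun a => hgreedy _ _ _) (le_ciSup ?_ (σ (h+1) x))
    exact ⟨B, by rintro y ⟨a, rfl⟩; exact (abs_le.1 (hB _ _ _)).2⟩
  set G3 : X × Act → ℝ := fun p => ∫ x', V x' ∂(P h p) with hG3def
  have hG3sm : StronglyMeasurable G3 :=
    (hVmeas.comp measurable_snd).stronglyMeasurable.integral_kernel_prod_right'
  have hG3bd : ∀ p : X × Act, |G3 p| ≤ B := by
    intro p
    calc |G3 p| ≤ B * ((P h p) Set.univ).toReal := by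
          rw [← Real.norm_eq_abs]
          exact norm_integral_le_of_norm_le_const
            (Filter.Eventually.of_forall fun x => by rw [Real.norm_eq_abs]; exact hVbd x)
      _ = B := by simp
  have hbell : ∀ p : X × Act, bellman P R h (f (h+1)) p.1 p.2 = R h p.1 p.2 + G3 p := by
    intro p
    have hfe : (fun x' => ⨆ a', f (h+1) x' a') = V := funext hsup
    simp only [bellman, hfe]
    rfl
  have hint1 : Integrable (fun p : X × Act => f h p.1 p.2) (occupancy P x1 π h) :=
    integrable_of_abs_le (hfmeas h).aestronglyMeasurable B fun p => hB _ _ _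
  have hint2 : Integrable (fun p : X × Act => R h p.1 p.2) (occupancy P x1 π h) :=
    integrable_of_abs_le (hRmeas h).aestronglyMeasurable 1 fun p => by
      rcases hR01 h p.1 p.2 with ⟨h0, h1⟩; rw [abs_le]; constructor <;> linarith
  have hint3 : Integrable G3 (occupancy P x1 π h) :=
    integrable_of_abs_le hG3sm.aestronglyMeasurable B hG3bd
  have hG3occ : ∫ p : X × Act, G3 p ∂(occupancy P x1 π h)
      = ∫ x, f (h+1) x (σ (h+1) x) ∂(stateDist P x1 π (h+1)) := by
    have hmap : ∫ p : X × Act, G3 p ∂(occupancy P x1 π h) = ∫ x, G3 (x, π h x) ∂μ := by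
      rw [occupancy, integral_map he.aemeasurable hG3sm.aestronglyMeasurable]
    set κ' : Kernel X X := (P h).comap (fun x : X => (x, π h x)) he with hκ'def
    haveI : IsMarkovKernel κ' := by rw [hκ'def]; infer_instance
    have hbindeq : stateDist P x1 π (h+1) = μ.bind κ' := by
      rw [stateDist]
      rfl
    rw [hmap, hbindeq, integral_bind_kernel μ κ' hVmeas B hVbd]
    apply integral_congr_ae
    filter_upwards with x
    rw [hκ'def, Kernel.comap_apply]
  calc ∫ p : X × Act, (f h p.1 p.2 - bellman P R h (f (h+1)) p.1 p.2) ∂(occupancy P x1 π h)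
      = ∫ p : X × Act, (f h p.1 p.2 - (R h p.1 p.2 + G3 p)) ∂(occupancy P x1 π h) := by
        apply integral_congr_ae
        filter_upwards with p
        rw [hbell p]
    _ = (∫ p : X × Act, f h p.1 p.2 ∂(occupancy P x1 π h))
        - ((∫ p : X × Act, R h p.1 p.2 ∂(occupancy P x1 π h))
          + ∫ p : X × Act, G3 p ∂(occupancy P x1 π h)) := by
        have hint23 : Integrable (fun p : X × Act => R h p.1 p.2 + G3 p)
            (occupancy P x1 π h) := hint2.add hint3
        rw [integral_sub hint1 hint23, integral_add hint2 hint3]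
    _ = _ := by
        rw [hG3occ]
        have hfocc : ∫ p : X × Act, f h p.1 p.2 ∂(occupancy P x1 π h)
            = ∫ x, f h x (π h x) ∂μ := by
          rw [occupancy, integral_map he.aemeasurable (hfmeas h).aestronglyMeasurable]
        rw [hfocc]; ring

/-- Offline RL with the Bellman transfer coefficient: if `f ∈ F` has small
squared Bellman error under the offline distributions `ρ_h`, then its greedy
policy is near-optimal.  Steps are 0-indexed (`h = 0,…,H−1`), and the
convention `f_{H+1} = 0` becomes `f H = 0`. -/
theorem offline_rl_bellman_transfer
    (H : ℕ) (hH : 0 < H)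
    (P : ℕ → Kernel (X × Act) X) (hP : ∀ h, IsMarkovKernel (P h))
    (R : ℕ → X → Act → ℝ)
    (hRmeas : ∀ h, Measurable (fun p : X × Act => R h p.1 p.2))
    (hR01 : ∀ h x a, R h x a ∈ Set.Icc (0 : ℝ) 1)
    (x1 : X)
    (ρ : ℕ → Measure (X × Act)) (hρ : ∀ h, IsProbabilityMeasure (ρ h))
    (F : Set (ℕ → X → Act → ℝ))
    (hFmeas : ∀ f ∈ F, ∀ h, Measurable (fun p : X × Act => f h p.1 p.2))
    (hFbdd : ∀ f ∈ F, ∃ B : ℝ, ∀ h x a, |f h x a| ≤ B)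
    (hF0 : ∀ f ∈ F, f H = 0)
    (πf : (ℕ → X → Act → ℝ) → ℕ → X → Act)
    (hπmeas : ∀ f ∈ F, ∀ h, Measurable (πf f h))
    (hπgreedy : ∀ f ∈ F, ∀ h x a, f h x a ≤ f h x (πf f h x))
    (Qstar : ℕ → X → Act → ℝ)
    (hQstarH : Qstar H = 0)
    (hQstarRec : ∀ h < H, Qstar h = bellman P R h (Qstar (h + 1)))
    (hQstarF : Qstar ∈ F)
    (C : ℝ) (hC : 0 ≤ C)
    (hBTC : ∀ f ∈ F, ∀ g ∈ F,
      (∑ h ∈ Finset.range H,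
        ∫ p : X × Act,
          |f h p.1 p.2 - bellman P R h (f (h + 1)) p.1 p.2|
          ∂(occupancy P x1 (πf g) h))
        ≤ C * ∑ h ∈ Finset.range H,
            Real.sqrt (∫ p : X × Act,
              (f h p.1 p.2 - bellman P R h (f (h + 1)) p.1 p.2) ^ 2 ∂(ρ h)))
    (f : ℕ → X → Act → ℝ) (hf : f ∈ F)
    (ε : ℝ) (hε : 0 ≤ ε)
    (hsmall : ∀ h < H,
      (∫ p : X × Act,
        (f h p.1 p.2 - bellman P R h (f (h + 1)) p.1 p.2) ^ 2 ∂(ρ h)) ≤ ε) :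
    ret P R x1 H (πf Qstar) - ret P R x1 H (πf f)
      ≤ 2 * C * H * Real.sqrt ε := by
  obtain ⟨B, hB⟩ := hFbdd f hf
  have hfm := hFmeas f hf
  have hσm := hπmeas f hf
  have hgr := hπgreedy f hf
  have hπsm := hπmeas Qstar hQstarF
  have hret : ∀ (π : ℕ → X → Act), (∀ h, Measurable (π h)) →
      ret P R x1 H π
        = (∑ h ∈ Finset.range H,
            ((∫ x, f h x (π h x) ∂(stateDist P x1 π h))
              - (∫ x, f (h+1) x (πf f (h+1) x) ∂(stateDist P x1 π (h+1)))))
          - ∑ h ∈ Finset.range H,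
              ∫ p : X × Act, (f h p.1 p.2 - bellman P R h (f (h + 1)) p.1 p.2)
                ∂(occupancy P x1 π h) := by
    intro π hπm
    rw [ret, ← Finset.sum_sub_distrib]
    refine Finset.sum_congr rfl fun h _ => ?_
    have h0 := step_decomp P hP R hRmeas hR01 x1 f hfm B hB (πf f) hσm hgr π hπm h
    linarith
  have habs : ∀ (π : ℕ → X → Act) (h : ℕ),
      |∫ p : X × Act, (f h p.1 p.2 - bellman P R h (f (h + 1)) p.1 p.2)
          ∂(occupancy P x1 π h)|
        ≤ ∫ p : X × Act, |f h p.1 p.2 - bellman P R h (f (h + 1)) p.1 p.2|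
            ∂(occupancy P x1 π h) := by
    intro π h
    rw [← Real.norm_eq_abs]
    simpa only [Real.norm_eq_abs] using
      norm_integral_le_integral_norm (μ := occupancy P x1 π h)
        (fun p : X × Act => f h p.1 p.2 - bellman P R h (f (h + 1)) p.1 p.2)
  have hS0 : ∀ (π : ℕ → X → Act),
      (∫ x, f 0 x (πf f 0 x) ∂(stateDist P x1 π 0)) = f 0 x1 (πf f 0 x1) := by
    intro π
    rw [stateDist]
    exact integral_dirac' _ _ ((hfm 0).comp (measurable_id.prodMk (hσm 0))).stronglyMeasurable
  have hSH : ∀ (π : ℕ → X → Act),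
      (∫ x, f H x (πf f H x) ∂(stateDist P x1 π H)) = 0 := by
    intro π
    rw [hF0 f hf]
    simp
  have htel : ∀ (π : ℕ → X → Act),
      (∑ h ∈ Finset.range H,
        ((∫ x, f h x (πf f h x) ∂(stateDist P x1 π h))
          - (∫ x, f (h+1) x (πf f (h+1) x) ∂(stateDist P x1 π (h+1)))))
        = f 0 x1 (πf f 0 x1) := by
    intro π
    rw [Finset.sum_range_sub' (fun h => ∫ x, f h x (πf f h x) ∂(stateDist P x1 π h)),
      hS0 π, hSH π, sub_zero]
  have hretf : ret P R x1 H (πf f) = f 0 x1 (πf f 0 x1)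
      - ∑ h ∈ Finset.range H,
          ∫ p : X × Act, (f h p.1 p.2 - bellman P R h (f (h + 1)) p.1 p.2)
            ∂(occupancy P x1 (πf f) h) := by
    rw [hret (πf f) hσm, htel (πf f)]
  have hmono : ∀ h, (∫ x, f h x (πf Qstar h x) ∂(stateDist P x1 (πf Qstar) h))
      ≤ ∫ x, f h x (πf f h x) ∂(stateDist P x1 (πf Qstar) h) := by
    intro h
    haveI := isProb_stateDist P hP x1 (πf Qstar) hπsm h
    refine integral_mono ?_ ?_ fun x => hgr h x (πf Qstar h x)
    · exact integrable_of_abs_le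
        ((hfm h).comp (measurable_id.prodMk (hπsm h))).aestronglyMeasurable B
        (fun x => hB _ _ _)
    · exact integrable_of_abs_le
        ((hfm h).comp (measurable_id.prodMk (hσm h))).aestronglyMeasurable B
        (fun x => hB _ _ _)
  have hretq : ret P R x1 H (πf Qstar) ≤ f 0 x1 (πf f 0 x1)
      - ∑ h ∈ Finset.range H,
          ∫ p : X × Act, (f h p.1 p.2 - bellman P R h (f (h + 1)) p.1 p.2)
            ∂(occupancy P x1 (πf Qstar) h) := by
    rw [hret (πf Qstar) hπsm]
    have hle : (∑ h ∈ Finset.range H,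
        ((∫ x, f h x (πf Qstar h x) ∂(stateDist P x1 (πf Qstar) h))
          - (∫ x, f (h+1) x (πf f (h+1) x) ∂(stateDist P x1 (πf Qstar) (h+1)))))
        ≤ f 0 x1 (πf f 0 x1) := by
      calc (∑ h ∈ Finset.range H,
          ((∫ x, f h x (πf Qstar h x) ∂(stateDist P x1 (πf Qstar) h))
            - (∫ x, f (h+1) x (πf f (h+1) x) ∂(stateDist P x1 (πf Qstar) (h+1)))))
          ≤ ∑ h ∈ Finset.range H,
              ((∫ x, f h x (πf f h x) ∂(stateDist P x1 (πf Qstar) h))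
                - (∫ x, f (h+1) x (πf f (h+1) x) ∂(stateDist P x1 (πf Qstar) (h+1)))) :=
            Finset.sum_le_sum fun h _ => sub_le_sub_right (hmono h) _
        _ = f 0 x1 (πf f 0 x1) := htel (πf Qstar)
    linarith
  have hEf_le : (∑ h ∈ Finset.range H,
      ∫ p : X × Act, (f h p.1 p.2 - bellman P R h (f (h + 1)) p.1 p.2)
        ∂(occupancy P x1 (πf f) h))
      ≤ ∑ h ∈ Finset.range H,
          ∫ p : X × Act, |f h p.1 p.2 - bellman P R h (f (h + 1)) p.1 p.2|
            ∂(occupancy P x1 (πf f) h) :=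
    Finset.sum_le_sum fun h _ => (le_abs_self _).trans (habs (πf f) h)
  have hEq_ge : -(∑ h ∈ Finset.range H,
      ∫ p : X × Act, (f h p.1 p.2 - bellman P R h (f (h + 1)) p.1 p.2)
        ∂(occupancy P x1 (πf Qstar) h))
      ≤ ∑ h ∈ Finset.range H,
          ∫ p : X × Act, |f h p.1 p.2 - bellman P R h (f (h + 1)) p.1 p.2|
            ∂(occupancy P x1 (πf Qstar) h) := by
    rw [← Finset.sum_neg_distrib]
    exact Finset.sum_le_sum fun h _ => (neg_le_abs _).trans (habs (πf Qstar) h)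
  have h1 := hBTC f hf Qstar hQstarF
  have h2 := hBTC f hf f hf
  have hT : (∑ h ∈ Finset.range H,
      Real.sqrt (∫ p : X × Act,
        (f h p.1 p.2 - bellman P R h (f (h + 1)) p.1 p.2) ^ 2 ∂(ρ h)))
      ≤ (H : ℝ) * Real.sqrt ε := by
    calc (∑ h ∈ Finset.range H,
        Real.sqrt (∫ p : X × Act,
          (f h p.1 p.2 - bellman P R h (f (h + 1)) p.1 p.2) ^ 2 ∂(ρ h)))
        ≤ ∑ _h ∈ Finset.range H, Real.sqrt ε :=
          Finset.sum_le_sum fun h hh => Real.sqrt_le_sqrt (hsmall h (Finset.mem_range.1 hh))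
      _ = (H : ℝ) * Real.sqrt ε := by
          simp [Finset.sum_const, Finset.card_range, nsmul_eq_mul]
  have hCT : C * (∑ h ∈ Finset.range H,
      Real.sqrt (∫ p : X × Act,
        (f h p.1 p.2 - bellman P R h (f (h + 1)) p.1 p.2) ^ 2 ∂(ρ h)))
      ≤ C * ((H : ℝ) * Real.sqrt ε) := mul_le_mul_of_nonneg_left hT hC
  have hfin : 2 * C * (H : ℝ) * Real.sqrt ε
      = C * ((H : ℝ) * Real.sqrt ε) + C * ((H : ℝ) * Real.sqrt ε) := by ring
  linarith

end OfflineRLBellmanTransfer
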